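/- As formal power series over ℚ, U₀(q) = U₊(q) + (1/2)·{q}_∞, where U₀(q) = (1/2) ∑_{m=0}^{∞} (−1)^{z(m)} q^m. -/

import Mathlib

/-- The Mahler factorial `{q}_n = ∏_{j=0}^{n-1} (1 - q^{2^j})` as a power series over `ℚ`. -/
noncomputable def mahlerFacPS (n : ℕ) : PowerSeries ℚ :=
  ∏ j ∈ Finset.range n, (1 - PowerSeries.X ^ 2 ^ j)

/-- `{q}_∞ = ∏_{j=0}^∞ (1 - q^{2^j})` as a formal power series over `ℚ`: the infinite
product converges coefficientwise, its `n`-th coefficient being that of any partial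
product `{q}_N` with `2^N > n`, e.g. `N = n + 1`. -/
noncomputable def mahlerFacInf : PowerSeries ℚ :=
  PowerSeries.mk fun n => PowerSeries.coeff n (mahlerFacPS (n + 1))

/-- `U₊(q) = ∑_{i=0}^∞ q^{2^{2i}} {q}_{2i}` as a formal power series over `ℚ`; each
coefficient receives contributions from only finitely many summands. -/
noncomputable def Uplus : PowerSeries ℚ :=
  PowerSeries.mk fun n =>
    ∑ i ∈ Finset.range (n + 1),
      PowerSeries.coeff n (PowerSeries.X ^ 2 ^ (2 * i) * mahlerFacPS (2 * i))

/-- `z m` is the number of zero digits among the (nonleading) binary digits of `m`,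
with `z 0 = 0`. -/
def zeroDigits (m : ℕ) : ℕ := (Nat.digits 2 m).count 0

/-- `U₀(q) = (1/2) ∑_{m=0}^∞ (-1)^{z(m)} q^m` as a formal power series over `ℚ`. -/
noncomputable def U0PS : PowerSeries ℚ :=
  PowerSeries.mk fun m => (1 / 2 : ℚ) * (-1) ^ zeroDigits m

/-- The binary digit sum (number of one bits). -/
def sOnes (n : ℕ) : ℕ := (Nat.digits 2 n).sum

lemma sOnes_rec (r : ℕ) : sOnes r = r % 2 + sOnes (r / 2) := by
  rcases eq_or_ne r 0 with rfl | h
  · simp [sOnes]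
  · unfold sOnes
    rw [Nat.digits_def' (by norm_num) (Nat.pos_of_ne_zero h)]
    simp

lemma sOnes_add_pow (N : ℕ) : ∀ r < 2 ^ N, sOnes (2 ^ N + r) = sOnes r + 1 := by
  induction N with
  | zero =>
    intro r hr
    interval_cases r
    simp [sOnes]
  | succ N ih =>
    intro r hr
    have h1 : (2 ^ (N + 1) + r) % 2 = r % 2 := by omega
    have h2 : (2 ^ (N + 1) + r) / 2 = 2 ^ N + r / 2 := by rw [pow_succ]; omega
    have h3 : r / 2 < 2 ^ N := by rw [pow_succ] at hr; omega
    rw [sOnes_rec (2 ^ (N + 1) + r), h1, h2, ih _ h3, sOnes_rec r]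
    ring

lemma coeff_mahler (N : ℕ) : ∀ n : ℕ,
    PowerSeries.coeff n (mahlerFacPS N) =
      if n < 2 ^ N then (-1 : ℚ) ^ sOnes n else 0 := by
  induction N with
  | zero =>
    intro n
    simp only [mahlerFacPS, Finset.range_zero, Finset.prod_empty, PowerSeries.coeff_one,
      pow_zero, Nat.lt_one_iff]
    rcases eq_or_ne n 0 with rfl | h
    · simp [sOnes]
    · simp [h]
  | succ N ih =>
    intro n
    have hprod : mahlerFacPS (N + 1) = mahlerFacPS N * (1 - PowerSeries.X ^ 2 ^ N) := by
      rw [mahlerFacPS, Finset.prod_range_succ]; rfl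
    have hp : 0 < (2:ℕ) ^ N := pow_pos (by norm_num) N
    have hps : (2:ℕ) ^ (N + 1) = 2 ^ N * 2 := pow_succ 2 N
    rw [hprod, mul_sub, mul_one, map_sub, PowerSeries.coeff_mul_X_pow', ih]
    rcases lt_trichotomy n (2 ^ N) with h | h | h
    · rw [if_pos h, if_neg (by omega), if_pos (by omega), sub_zero]
    · subst h
      rw [if_neg (by omega), if_pos le_rfl, ih, if_pos (by omega),
        if_pos (by omega)]
      have := sOnes_add_pow N 0 hp
      simp only [Nat.sub_self, add_zero] at this ⊢
      rw [this]
      simp [sOnes]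
    · rw [if_neg (by omega), if_pos h.le, ih, zero_sub]
      by_cases h2 : n < 2 ^ (N + 1)
      · rw [if_pos (by omega), if_pos h2]
        have key : sOnes (2 ^ N + (n - 2 ^ N)) = sOnes (n - 2 ^ N) + 1 :=
          sOnes_add_pow N _ (by omega)
        rw [Nat.add_sub_cancel' h.le] at key
        rw [key]
        ring
      · rw [if_neg (by omega), if_neg h2, neg_zero]

lemma count_sum_aux : ∀ l : List ℕ, (∀ d ∈ l, d < 2) → l.count 0 + l.sum = l.length := by
  intro l
  induction l with
  | nil => simp
  | cons a l ih =>
    intro h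
    have ha : a < 2 := h a (by simp)
    have hl := ih fun d hd => h d (by simp [hd])
    rcases (by omega : a = 0 ∨ a = 1) with rfl | rfl
    · have hc : List.count 0 (0 :: l) = List.count 0 l + 1 := by
        rw [List.count_cons]; norm_num
      simp only [List.sum_cons, List.length_cons]
      omega
    · have hc : List.count 0 (1 :: l) = List.count 0 l := by
        rw [List.count_cons]; norm_num
      simp only [List.sum_cons, List.length_cons]
      omega

lemma zd_add_sOnes (n : ℕ) (h : n ≠ 0) : zeroDigits n + sOnes n = Nat.log 2 n + 1 := by
  have h1 := count_sum_aux (Nat.digits 2 n) (fun d hd => Nat.digits_lt_base (by norm_num) hd)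
  have h2 : (Nat.digits 2 n).length = Nat.log 2 n + 1 := Nat.digits_len 2 n (by norm_num) h
  unfold zeroDigits sOnes
  omega

lemma uplus_term (n i : ℕ) (hn : n ≠ 0) :
    PowerSeries.coeff n (PowerSeries.X ^ 2 ^ (2 * i) * mahlerFacPS (2 * i)) =
      if Nat.log 2 n = 2 * i then (-1 : ℚ) ^ sOnes (n - 2 ^ (2 * i)) else 0 := by
  have hps : (2:ℕ) ^ (2 * i + 1) = 2 ^ (2 * i) * 2 := pow_succ 2 (2 * i)
  rw [PowerSeries.coeff_X_pow_mul', coeff_mahler]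
  by_cases hle : 2 ^ (2 * i) ≤ n
  · rw [if_pos hle]
    by_cases hlt2 : n - 2 ^ (2 * i) < 2 ^ (2 * i)
    · rw [if_pos hlt2, if_pos (Nat.log_eq_of_pow_le_of_lt_pow hle (by omega))]
    · rw [if_neg hlt2, if_neg]
      intro hlog
      have h1 : 2 ^ (2 * i + 1) ≤ n := by omega
      have h2 := Nat.lt_pow_succ_log_self (by norm_num : 1 < 2) n
      rw [hlog] at h2
      omega
  · rw [if_neg hle, if_neg]
    intro hlog
    have := Nat.pow_log_le_self 2 hn
    rw [hlog] at this
    omega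

theorem stmt10 : U0PS = Uplus + (1 / 2 : ℚ) • mahlerFacInf := by
  ext n
  rw [map_add, PowerSeries.coeff_smul]
  simp only [U0PS, Uplus, mahlerFacInf, PowerSeries.coeff_mk, smul_eq_mul]
  have hinf : PowerSeries.coeff n (mahlerFacPS (n + 1)) = (-1 : ℚ) ^ sOnes n := by
    rw [coeff_mahler, if_pos (lt_of_lt_of_le (Nat.lt_two_pow_self (n := n)) (by
      exact Nat.pow_le_pow_right (by norm_num) (by omega)))]
  rw [hinf]
  rcases eq_or_ne n 0 with rfl | hn
  · simp [zeroDigits, sOnes, PowerSeries.coeff_X_pow_mul']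
  simp only [uplus_term n _ hn]
  set L := Nat.log 2 n with hL
  have hpow : 2 ^ L ≤ n := Nat.pow_log_le_self 2 hn
  have hlt : n < 2 ^ (L + 1) := Nat.lt_pow_succ_log_self (by norm_num) n
  have hzs := zd_add_sOnes n hn
  have h1 : ((-1 : ℚ)) ^ zeroDigits n * (-1) ^ sOnes n = (-1) ^ (L + 1) := by
    rw [← pow_add, hzs]
  have h2 : ((-1 : ℚ)) ^ sOnes n * (-1) ^ sOnes n = 1 := by
    rw [← pow_add]; exact Even.neg_one_pow ⟨sOnes n, rfl⟩
  have hsign : ((-1 : ℚ)) ^ zeroDigits n = (-1) ^ (L + 1) * (-1) ^ sOnes n := by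
    linear_combination ((-1 : ℚ) ^ sOnes n) * h1 - ((-1 : ℚ) ^ zeroDigits n) * h2
  rcases Nat.even_or_odd L with hLe | hLo
  · -- L even : exactly one term contributes
    obtain ⟨i₀, hi₀⟩ := hLe
    have hi₀' : L = 2 * i₀ := by omega
    have hmem : i₀ ∈ Finset.range (n + 1) := by
      have := Nat.lt_two_pow_self (n := L)
      simp only [Finset.mem_range]
      omega
    have hsum : (∑ i ∈ Finset.range (n + 1),
        if Nat.log 2 n = 2 * i then (-1 : ℚ) ^ sOnes (n - 2 ^ (2 * i)) else 0) =
        (-1 : ℚ) ^ sOnes (n - 2 ^ L) := by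
      rw [Finset.sum_eq_single i₀]
      · rw [if_pos (by omega), ← hi₀']
      · intro j _ hj
        rw [if_neg (by omega)]
      · intro h; exact absurd hmem h
    rw [hsum]
    have hs : sOnes n = sOnes (n - 2 ^ L) + 1 := by
      have key : sOnes (2 ^ L + (n - 2 ^ L)) = sOnes (n - 2 ^ L) + 1 :=
        sOnes_add_pow L _ (by omega)
      rwa [Nat.add_sub_cancel' hpow] at key
    have hps : ((-1 : ℚ)) ^ sOnes n = -(-1) ^ sOnes (n - 2 ^ L) := by
      rw [hs, pow_succ]; ring
    have hL1 : ((-1 : ℚ)) ^ (L + 1) = -1 := Odd.neg_one_pow ⟨i₀, by omega⟩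
    rw [hsign, hps, hL1]
    ring
  · -- L odd : no term contributes
    have hsum : (∑ i ∈ Finset.range (n + 1),
        if Nat.log 2 n = 2 * i then (-1 : ℚ) ^ sOnes (n - 2 ^ (2 * i)) else 0) = 0 := by
      apply Finset.sum_eq_zero
      intro j _
      rw [if_neg]
      intro hc
      exact (Nat.not_odd_iff_even.mpr ⟨j, by omega⟩) hLo
    rw [hsum]
    have hL1 : ((-1 : ℚ)) ^ (L + 1) = 1 := Even.neg_one_pow (by
      rcases hLo with ⟨k, hk⟩; exact ⟨k + 1, by omega⟩)
    rw [hsign, hL1]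
    ring
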